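/- Let G ∈ 𝓕 be an arc (with endpoints (0,1) and (1,0), contained in the triangle W, obtained as an arc of the boundary of a strictly convex smooth disk supported by the half-planes x ≤ 1 and y ≤ 1) that is an integral curve of y′(1−x)(x−y+1) + (1−y)(y−x+1) = 0 on 0 < x < 1. Then G is a conic section arc satisfying x² + y² − 1 + c(x−1)(y−1) = 0 for some real c < 2. -/

import Mathlib

/-- A convex body `K ⊆ ℝ²` is smooth if at every boundary point there is a unique
(normalized) supporting linear functional. -/
def SmoothBody (K : Set (ℝ × ℝ)) : Prop :=
  ∀ p ∈ frontier K, ∃! f : (ℝ × ℝ) →L[ℝ] ℝ, ‖f‖ = 1 ∧ ∀ z ∈ K, f z ≤ f p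

theorem stmt_8 (g : ℝ → ℝ)
    (hg0 : g 0 = 1) (hg1 : g 1 = 0)
    (hW : ∀ x ∈ Set.Ioo (0 : ℝ) 1, x < 1 ∧ g x < 1 ∧ 1 < x + g x)
    -- G is an arc of the boundary of a strictly convex smooth disk supported by
    -- the half-planes x ≤ 1 and y ≤ 1:
    (K : Set (ℝ × ℝ)) (hKcomp : IsCompact K) (hKint : (interior K).Nonempty)
    (hKstrict : StrictConvex ℝ K) (hKsmooth : SmoothBody K)
    (hKx : K ⊆ {p : ℝ × ℝ | p.1 ≤ 1}) (hKy : K ⊆ {p : ℝ × ℝ | p.2 ≤ 1})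
    (harc : ∀ x ∈ Set.Icc (0 : ℝ) 1, (x, g x) ∈ frontier K)
    -- G is an integral curve of the differential equation on (0,1):
    (hC1 : ContDiffOn ℝ 1 g (Set.Ioo (0 : ℝ) 1))
    (hode : ∀ x ∈ Set.Ioo (0 : ℝ) 1,
      deriv g x * (1 - x) * (x - g x + 1) + (1 - g x) * (g x - x + 1) = 0) :
    ∃ c : ℝ, c < 2 ∧ ∀ x ∈ Set.Icc (0 : ℝ) 1,
      x ^ 2 + (g x) ^ 2 - 1 + c * (x - 1) * (g x - 1) = 0 := by
  set φ : ℝ → ℝ := fun x => (x ^ 2 + (g x) ^ 2 - 1) / ((x - 1) * (g x - 1)) with hφ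
  -- basic facts on (0,1)
  have hv : ∀ x ∈ Set.Ioo (0 : ℝ) 1, (x - 1) * (g x - 1) > 0 := by
    intro x hx
    obtain ⟨h1, h2, h3⟩ := hW x hx
    have := hx.1
    nlinarith
  -- φ has derivative 0 on (0,1)
  have hder : ∀ x ∈ Set.Ioo (0 : ℝ) 1, HasDerivAt φ 0 x := by
    intro x hx
    obtain ⟨h1, h2, h3⟩ := hW x hx
    have hx0 := hx.1
    have hgd : DifferentiableAt ℝ g x :=
      (hC1.contDiffAt (isOpen_Ioo.mem_nhds hx)).differentiableAt one_ne_zero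
    set y' := deriv g x with hy'
    have hgder : HasDerivAt g y' x := hgd.hasDerivAt
    have hu : HasDerivAt (fun t => t ^ 2 + (g t) ^ 2 - 1) (2 * x + 2 * g x * y') x := by
      have h1 : HasDerivAt (fun t : ℝ => t ^ 2) (2 * x) x := by
        simpa using (hasDerivAt_pow 2 x)
      have h2 : HasDerivAt (fun t => (g t) ^ 2) (2 * g x * y') x := by
        have := (hasDerivAt_pow 2 (g x)).comp x hgder
        simpa [mul_comm, mul_assoc, Function.comp_def] using this
      simpa using (h1.add h2).sub_const 1
    have hvv : HasDerivAt (fun t => (t - 1) * (g t - 1)) ((g x - 1) + (x - 1) * y') x := by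
      have h1 : HasDerivAt (fun t : ℝ => t - 1) 1 x := (hasDerivAt_id x).sub_const 1
      have h2 : HasDerivAt (fun t => g t - 1) y' x := hgder.sub_const 1
      simpa [one_mul, Pi.mul_def] using h1.mul h2
    have hvne : (x - 1) * (g x - 1) ≠ 0 := ne_of_gt (hv x hx)
    have hq := hu.div hvv hvne
    have hodex := hode x hx
    have hA : (1 - x) * (x - g x + 1) ≠ 0 := by
      have h4 : x - g x + 1 > 0 := by linarith
      exact ne_of_gt (mul_pos (by linarith) h4)
    -- numerator vanishes
    have hnum : (2 * x + 2 * g x * y') * ((x - 1) * (g x - 1)) -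
        (x ^ 2 + (g x) ^ 2 - 1) * ((g x - 1) + (x - 1) * y') = 0 := by
      have key : ((2 * x + 2 * g x * y') * ((x - 1) * (g x - 1)) -
          (x ^ 2 + (g x) ^ 2 - 1) * ((g x - 1) + (x - 1) * y')) *
          ((1 - x) * (x - g x + 1)) = 0 := by
        linear_combination (2 * g x * ((x - 1) * (g x - 1)) -
          (x ^ 2 + (g x) ^ 2 - 1) * (x - 1)) * hodex
      rcases mul_eq_zero.1 key with h | h
      · exact h
      · exact absurd h hA
    have : ((2 * x + 2 * g x * y') * ((x - 1) * (g x - 1)) -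
        (x ^ 2 + (g x) ^ 2 - 1) * ((g x - 1) + (x - 1) * y')) /
        ((x - 1) * (g x - 1)) ^ 2 = 0 := by
      rw [hnum]; simp
    rw [this] at hq
    exact hq
  -- φ is constant on (0,1)
  have hconst : ∀ x ∈ Set.Ioo (0 : ℝ) 1, φ x = φ (1/2) := by
    intro x hx
    have h12 : (1/2 : ℝ) ∈ Set.Ioo (0 : ℝ) 1 := by norm_num
    refine (convex_Ioo (0:ℝ) 1).is_const_of_fderivWithin_eq_zero
      (fun z hz => ((hder z hz).differentiableAt).differentiableWithinAt) ?_ hx h12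
    intro z hz
    rw [fderivWithin_of_isOpen isOpen_Ioo hz, (hder z hz).hasFDerivAt.fderiv]
    ext t
    simp
  refine ⟨-φ (1/2), ?_, ?_⟩
  · -- c < 2
    have h12 : (1/2 : ℝ) ∈ Set.Ioo (0 : ℝ) 1 := by norm_num
    obtain ⟨h1, h2, h3⟩ := hW _ h12
    have hvpos := hv _ h12
    have : -(((1:ℝ)/2) ^ 2 + (g (1/2)) ^ 2 - 1) < 2 * (((1:ℝ)/2 - 1) * (g (1/2) - 1)) := by
      nlinarith
    have h2' : -φ (1/2) = -(((1:ℝ)/2) ^ 2 + (g (1/2)) ^ 2 - 1) / (((1:ℝ)/2 - 1) * (g (1/2) - 1)) := by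
      rw [hφ]; ring
    rw [h2', div_lt_iff₀ hvpos]
    nlinarith
  · intro x hx
    rcases eq_or_lt_of_le hx.1 with h0 | h0
    · rw [← h0, hg0]; ring
    rcases eq_or_lt_of_le hx.2 with h1 | h1
    · rw [h1, hg1]; ring
    have hxI : x ∈ Set.Ioo (0:ℝ) 1 := ⟨h0, h1⟩
    have hc := hconst x hxI
    have hvne : (x - 1) * (g x - 1) ≠ 0 := ne_of_gt (hv x hxI)
    simp only [hφ] at hc
    have hc' := (div_eq_iff hvne).1 hc
    linear_combination hc'
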